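/- Let k ≥ 2 be an integer, let G = BS(1,k) = ℤ[1/k] ⋊_φ ℤ, let n ∈ ℤ, and let a₁, …, a_r ∈ ℤ[1/k] be distinct, so that A = {(a₁, tⁿ), …, (a_r, tⁿ)} is a set of r elements of G with equal t-exponent n. Then there exist natural numbers N₁, N₂ and a positive integer L such that, setting g = (0, t^{N₁})·(L, t⁰)·(0, t^{N₂}) ∈ G, the r elements g·(a_i, tⁿ), 1 ≤ i ≤ r, lie in pairwise distinct conjugacy classes of G; that is, c(g·A) = |A|. -/

import Mathlib

noncomputable section

/-- `ℤ[1/k]`: the additive subgroup `{a/kⁱ : a ∈ ℤ, i ∈ ℕ}` of `ℚ`. -/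
def zOneOver (k : ℕ) : AddSubgroup ℚ :=
  AddSubgroup.closure {x : ℚ | ∃ (a : ℤ) (i : ℕ), x = (a : ℚ) / (k : ℚ) ^ i}

lemma intCast_mem_zOneOver (k : ℕ) (a : ℤ) : (a : ℚ) ∈ zOneOver k :=
  AddSubgroup.subset_closure ⟨a, 0, by simp⟩

/-- Multiplication by `k` as an additive automorphism of `ℚ`. -/
def mulQ (k : ℕ) (hk : 2 ≤ k) : AddAut ℚ where
  toFun x := (k : ℚ) * x
  invFun x := ((k : ℚ))⁻¹ * x
  left_inv x := by
    have hk0 : (k : ℚ) ≠ 0 := by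
      have : 0 < k := by omega
      exact_mod_cast this.ne'
    field_simp
  right_inv x := by
    have hk0 : (k : ℚ) ≠ 0 := by
      have : 0 < k := by omega
      exact_mod_cast this.ne'
    field_simp
  map_add' x y := by ring

/-- The action of the generator `t` of `ℤ` on `ℚ` (written multiplicatively). -/
def bsAut (k : ℕ) (hk : 2 ≤ k) : MulAut (Multiplicative ℚ) :=
  AddEquiv.toMultiplicative (mulQ k hk)

lemma bsAut_apply (k : ℕ) (hk : 2 ≤ k) (y : Multiplicative ℚ) :
    Multiplicative.toAdd (bsAut k hk y) = (k : ℚ) * Multiplicative.toAdd y := rfl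

lemma bsAut_inv_apply (k : ℕ) (hk : 2 ≤ k) (y : Multiplicative ℚ) :
    Multiplicative.toAdd ((bsAut k hk)⁻¹ y) = ((k : ℚ))⁻¹ * Multiplicative.toAdd y := rfl

lemma bsAut_zpow (k : ℕ) (hk : 2 ≤ k) (n : ℤ) :
    ∀ y : Multiplicative ℚ,
      Multiplicative.toAdd ((bsAut k hk ^ n) y) = (k : ℚ) ^ n * Multiplicative.toAdd y := by
  have hk0 : (k : ℚ) ≠ 0 := by
    have : 0 < k := by omega
    exact_mod_cast this.ne'
  induction n using Int.induction_on with
  | zero => intro y; simp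
  | succ m ih =>
      intro y
      rw [zpow_add_one, MulAut.mul_apply, ih, bsAut_apply, zpow_add_one₀ hk0]
      ring
  | pred m ih =>
      intro y
      rw [zpow_sub_one, MulAut.mul_apply, ih, bsAut_inv_apply, zpow_sub_one₀ hk0]
      ring

lemma zOneOver_smul (k : ℕ) (hk : 2 ≤ k) (n : ℤ) {x : ℚ} (hx : x ∈ zOneOver k) :
    (k : ℚ) ^ n * x ∈ zOneOver k := by
  have hk0 : (k : ℚ) ≠ 0 := by
    have : 0 < k := by omega
    exact_mod_cast this.ne'
  induction hx using AddSubgroup.closure_induction with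
  | mem x hx =>
      obtain ⟨a, i, rfl⟩ := hx
      apply AddSubgroup.subset_closure
      rcases le_or_gt (i : ℤ) n with h | h
      · refine ⟨a * k ^ (n - i).toNat, 0, ?_⟩
        have h1 : ((n - i).toNat : ℤ) = n - i := Int.toNat_of_nonneg (by omega)
        push_cast
        rw [← zpow_natCast (k : ℚ) (n - i).toNat]
        rw [h1]
        rw [zpow_sub₀ hk0]
        field_simp
        ring_nf
        try simp only [zpow_natCast]
      · refine ⟨a, (i - n).toNat, ?_⟩
        have h1 : (((i : ℤ) - n).toNat : ℤ) = (i : ℤ) - n := Int.toNat_of_nonneg (by omega)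
        rw [← zpow_natCast (k : ℚ) i, ← zpow_natCast (k : ℚ) ((i : ℤ) - n).toNat, h1,
          zpow_sub₀ hk0]
        field_simp
  | zero => simpa using (zOneOver k).zero_mem
  | add x y hx hy ihx ihy =>
      rw [mul_add]
      exact add_mem ihx ihy
  | neg x hx ihx =>
      rw [mul_neg]
      exact neg_mem ihx

/-- The ambient group `ℚ ⋊_φ ℤ`, in which `BS(1,k) = ℤ[1/k] ⋊_φ ℤ` sits. -/
abbrev BSAmbient (k : ℕ) (hk : 2 ≤ k) :=
  Multiplicative ℚ ⋊[zpowersHom (MulAut (Multiplicative ℚ)) (bsAut k hk)] Multiplicative ℤ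

/-- The Baumslag–Solitar group `BS(1,k) = ℤ[1/k] ⋊_φ ℤ`, realised as the subgroup of
`ℚ ⋊_φ ℤ` of elements whose first coordinate lies in `ℤ[1/k]`. -/
def BS (k : ℕ) (hk : 2 ≤ k) : Subgroup (BSAmbient k hk) where
  carrier := {g | Multiplicative.toAdd g.left ∈ zOneOver k}
  one_mem' := by
    simpa using (zOneOver k).zero_mem
  mul_mem' := by
    intro a b ha hb
    simp only [Set.mem_setOf_eq, SemidirectProduct.mul_left, toAdd_mul] at *
    refine add_mem ha ?_
    rw [zpowersHom_apply, bsAut_zpow]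
    exact zOneOver_smul k hk _ hb
  inv_mem' := by
    intro a ha
    simp only [Set.mem_setOf_eq, SemidirectProduct.inv_left, zpowersHom_apply, toAdd_inv] at *
    rw [bsAut_zpow, toAdd_inv, mul_neg]
    exact neg_mem (zOneOver_smul k hk _ ha)

/-- The element `(x, tⁿ)` of `BS(1,k)`, for `x ∈ ℤ[1/k]` and `n ∈ ℤ`. -/
def bsElem (k : ℕ) (hk : 2 ≤ k) (x : ℚ) (hx : x ∈ zOneOver k) (n : ℤ) : ↥(BS k hk) :=
  ⟨⟨Multiplicative.ofAdd x, Multiplicative.ofAdd n⟩, hx⟩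


-- ### Auxiliary lemmas ###

lemma BS'rep_mem (k : ℕ) (hk : 2 ≤ k) {x : ℚ} (hx : x ∈ zOneOver k) :
    ∃ (a : ℤ) (i : ℕ), x = (a : ℚ) / (k : ℚ) ^ i := by
  have hk0 : (k : ℚ) ≠ 0 := by
    have : 0 < k := by omega
    exact_mod_cast this.ne'
  induction hx using AddSubgroup.closure_induction with
  | mem x hx => exact hx
  | zero => exact ⟨0, 0, by simp⟩
  | add x y hx hy ihx ihy =>
      obtain ⟨a, i, rfl⟩ := ihx
      obtain ⟨b, j, rfl⟩ := ihy
      refine ⟨a * k ^ j + b * k ^ i, i + j, ?_⟩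
      rw [div_add_div _ _ (pow_ne_zero i hk0) (pow_ne_zero j hk0), pow_add]
      push_cast
      ring
  | neg x hx ihx =>
      obtain ⟨a, i, rfl⟩ := ihx
      exact ⟨-a, i, by push_cast; ring⟩

lemma BS'dvd_pow_sub_pow_mod (k c : ℕ) (hc : 0 < c) (q : ℕ) :
    ((k:ℤ) ^ c - 1) ∣ (k:ℤ) ^ q - (k:ℤ) ^ (q % c) := by
  obtain ⟨d, e, rfl, he⟩ : ∃ d e, q = c * d + e ∧ e < c :=
    ⟨q / c, q % c, (Nat.div_add_mod q c).symm, Nat.mod_lt _ hc⟩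
  rw [Nat.mul_add_mod, Nat.mod_eq_of_lt he, pow_add, pow_mul]
  have h : ((k:ℤ) ^ c - 1) ∣ ((k:ℤ) ^ c) ^ d - 1 ^ d := sub_dvd_pow_sub_pow _ _ _
  simp only [one_pow] at h
  obtain ⟨t, ht⟩ := h
  exact ⟨t * (k:ℤ) ^ e, by rw [show ((k:ℤ)^c)^d = 1 + ((k:ℤ)^c - 1) * t by omega]; ring⟩

lemma BS'reduce_dvd (k c : ℕ) (hc : 0 < c) (a₁ a₂ : ℕ) (X Y : ℤ)
    (h : ((k:ℤ) ^ c - 1) ∣ (k:ℤ) ^ a₁ * X - (k:ℤ) ^ a₂ * Y) :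
    ((k:ℤ) ^ c - 1) ∣ (k:ℤ) ^ ((a₁ + (c - a₂ % c)) % c) * X - Y := by
  set D := ((k:ℤ) ^ c - 1) with hD
  set β := c - a₂ % c with hβ
  have h1 : D ∣ (k:ℤ) ^ β * ((k:ℤ) ^ a₁ * X - (k:ℤ) ^ a₂ * Y) := Dvd.dvd.mul_left h _
  have h2 : D ∣ (k:ℤ) ^ (a₁ + β) - (k:ℤ) ^ ((a₁ + β) % c) := BS'dvd_pow_sub_pow_mod k c hc _
  have hc2 : c ∣ a₂ + β := by
    have hlt : a₂ % c < c := Nat.mod_lt _ hc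
    have hdm : c * (a₂ / c) + a₂ % c = a₂ := Nat.div_add_mod a₂ c
    refine ⟨a₂ / c + 1, ?_⟩
    rw [Nat.mul_add, Nat.mul_one]
    omega
  have h3 : D ∣ (k:ℤ) ^ (a₂ + β) - 1 := by
    have h4 := BS'dvd_pow_sub_pow_mod k c hc (a₂ + β)
    obtain ⟨w, hw⟩ := hc2
    rw [hw, Nat.mul_mod_right, pow_zero] at h4
    rwa [hw]
  have key : (k:ℤ) ^ ((a₁ + β) % c) * X - Y =
      (k:ℤ) ^ β * ((k:ℤ) ^ a₁ * X - (k:ℤ) ^ a₂ * Y)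
      - ((k:ℤ) ^ (a₁ + β) - (k:ℤ) ^ ((a₁ + β) % c)) * X
      + ((k:ℤ) ^ (a₂ + β) - 1) * Y := by
    rw [pow_add, pow_add]; ring
  rw [show (a₁ + (c - a₂ % c)) % c = (a₁ + β) % c from rfl, key]
  exact dvd_add (dvd_sub h1 (h2.mul_right X)) (h3.mul_right Y)

lemma BS'core_lemma (k : ℕ) (hk : 2 ≤ k) (p : ℕ) (hp : 1 ≤ p) (X Y : ℤ)
    (hX1 : (k:ℤ)^(p-1) ≤ X) (hX2 : X < (k:ℤ)^p)
    (hY1 : (k:ℤ)^(p-1) ≤ Y) (hY2 : Y < (k:ℤ)^p)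
    (γ : ℕ) (hγ : γ < 2*p)
    (hdvd : ((k:ℤ)^(2*p) - 1) ∣ (k:ℤ)^γ * X - Y) : X = Y := by
  set K : ℤ := (k:ℤ) with hKdef
  have hK : 2 ≤ K := by rw [hKdef]; exact_mod_cast hk
  have hK1 : (1:ℤ) ≤ K := by linarith
  have hK0 : (0:ℤ) < K := by linarith
  have hpow1 : ∀ a : ℕ, (1:ℤ) ≤ K^a := fun a => one_le_pow₀ hK1
  have hpowle : ∀ a b : ℕ, a ≤ b → K^a ≤ K^b := fun a b h => pow_le_pow_right₀ hK1 h
  have hXpos : 1 ≤ X := le_trans (hpow1 _) hX1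
  have hYpos : 1 ≤ Y := le_trans (hpow1 _) hY1
  have h16 : K^p * 2 ≤ K^(p+1) := by
    rw [pow_succ]; nlinarith [hpow1 p]
  have h6 : K^p < K^(2*p) := by
    have h15 := hpowle (p+1) (2*p) (by omega)
    linarith [hpow1 p]
  rcases le_or_gt γ p with hcase | hcase
  · have t1 : X ≤ K^p - 1 := by linarith
    have hb1 : K^γ * X ≤ K^(2*p) - K^γ :=
      calc K^γ * X ≤ K^γ * (K^p - 1) :=
            mul_le_mul_of_nonneg_left t1 (pow_nonneg (by linarith) γ)
        _ = K^(γ+p) - K^γ := by rw [pow_add]; ring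
        _ ≤ K^(2*p) - K^γ := by have := hpowle (γ+p) (2*p) (by omega); linarith
    have hz : K^γ * X - Y = 0 := by
      apply Int.eq_zero_of_abs_lt_dvd hdvd
      rw [abs_lt]
      constructor
      · have h5 : X ≤ K^γ * X := by nlinarith [hpow1 γ]
        linarith
      · have := hpow1 γ; linarith
    rcases Nat.eq_zero_or_pos γ with h0 | h0
    · rw [h0, pow_zero, one_mul] at hz; linarith
    · exfalso
      have h8 : K ≤ K^γ := by
        calc K = K^1 := (pow_one K).symm
          _ ≤ K^γ := hpowle 1 γ h0
      have hKp : K^p ≤ K^γ * X := by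
        calc K^p = K^(p-1) * K := by rw [← pow_succ]; congr 1; omega
          _ ≤ X * K^γ := mul_le_mul hX1 h8 (by linarith) (by linarith)
          _ = K^γ * X := by ring
      linarith
  · exfalso
    set δ := 2*p - γ with hδdef
    have hδ1 : 1 ≤ δ := by omega
    have hδ2 : δ ≤ p - 1 := by omega
    set ε := γ - p with hεdef
    have hεp : ε ≤ p - 1 := by omega
    have hKδpos : 0 < K^δ := pow_pos hK0 δ
    set u := X / K^δ with hu
    set v := X % K^δ with hv
    have hdm : K^δ * u + v = X := Int.mul_ediv_add_emod X (K^δ)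
    have hv0 : 0 ≤ v := Int.emod_nonneg X (ne_of_gt hKδpos)
    have hv1 : v < K^δ := Int.emod_lt_of_pos X hKδpos
    have hu1 : 1 ≤ u := by
      by_contra h
      push_neg at h
      have hu0 : u ≤ 0 := by linarith
      have h9 : K^δ * u ≤ 0 := mul_nonpos_of_nonneg_of_nonpos (le_of_lt hKδpos) hu0
      have h10 : K^δ ≤ X := le_trans (hpowle δ (p-1) hδ2) hX1
      linarith
    have hu2 : u < K^ε := by
      have h11 : K^δ * u ≤ X := by linarith
      have h12 : X < K^δ * K^ε := by rw [← pow_add, show δ + ε = p by omega]; exact hX2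
      exact lt_of_mul_lt_mul_left (by linarith) (le_of_lt hKδpos)
    have hKX : K^γ * X = K^(2*p) * u + K^γ * v := by
      rw [← hdm, show K^(2*p) = K^γ * K^δ by rw [← pow_add]; congr 1; omega]; ring
    have hdvd2 : (K^(2*p) - 1) ∣ (u + K^γ * v - Y) := by
      have heq : u + K^γ * v - Y = (K^γ * X - Y) - (K^(2*p) - 1) * u := by rw [hKX]; ring
      rw [heq]
      exact dvd_sub hdvd (dvd_mul_right _ _)
    have h19 : u ≤ K^(p-1) := le_trans (le_of_lt hu2) (hpowle ε (p-1) hεp)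
    have hγε : K^(p+1) ≤ K^γ := hpowle (p+1) γ (by omega)
    rcases eq_or_lt_of_le hv0 with hv2 | hv2
    · have hdvd3 : (K^(2*p) - 1) ∣ (u - Y) := by
        have heq : u + K^γ * v - Y = u - Y := by rw [← hv2]; ring
        rwa [heq] at hdvd2
      have huY : u - Y = 0 := by
        apply Int.eq_zero_of_abs_lt_dvd hdvd3
        rw [abs_lt]
        have hult : u ≤ K^p := le_trans h19 (hpowle (p-1) p (by omega))
        constructor <;> linarith
      have hXeq : X = K^δ * Y := by
        have huy : u = Y := by linarith
        rw [← hdm, ← hv2, huy]; ring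
      have hgt : K^p ≤ K^δ * Y := by
        calc K^p = K^δ * K^(p-δ) := by rw [← pow_add]; congr 1; omega
          _ ≤ K^δ * Y := by
              have h23 : K^(p-δ) ≤ K^(p-1) := hpowle _ _ (by omega)
              have := le_trans h23 hY1
              exact mul_le_mul_of_nonneg_left this (le_of_lt hKδpos)
      linarith
    · have h22 : K^γ ≤ K^γ * v :=
        le_mul_of_one_le_right (pow_nonneg (by linarith) γ) (by linarith)
      have hz1 : 0 < u + K^γ * v - Y := by linarith [hpow1 p]
      have hz2 : u + K^γ * v - Y < K^(2*p) - 1 := by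
        have hvle : v ≤ K^δ - 1 := by linarith [Int.lt_iff_add_one_le.mp hv1]
        have h17 : K^γ * v ≤ K^γ * (K^δ - 1) :=
          mul_le_mul_of_nonneg_left hvle (pow_nonneg (by linarith) γ)
        have h18 : K^γ * K^δ = K^(2*p) := by rw [← pow_add]; congr 1; omega
        have h24 : K^γ * (K^δ - 1) = K^(2*p) - K^γ := by rw [mul_sub, h18]; ring
        linarith [hpow1 (p+1), hY1]
      linarith [Int.le_of_dvd hz1 hdvd2]

lemma BS'bsElem_mul (k : ℕ) (hk : 2 ≤ k) (x x' : ℚ) (hx : x ∈ zOneOver k)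
    (hx' : x' ∈ zOneOver k) (m m' : ℤ) :
    bsElem k hk x hx m * bsElem k hk x' hx' m' =
      bsElem k hk (x + (k:ℚ)^m * x') (add_mem hx (zOneOver_smul k hk m hx')) (m + m') := by
  apply Subtype.ext
  show (bsElem k hk x hx m).1 * (bsElem k hk x' hx' m').1 = _
  apply SemidirectProduct.ext
  · simp only [bsElem, SemidirectProduct.mul_left, zpowersHom_apply]
    apply Multiplicative.toAdd.injective
    rw [toAdd_mul, bsAut_zpow]
    simp
  · simp [bsElem, SemidirectProduct.mul_right, ← ofAdd_add]

lemma BS'bsElem_ext (k : ℕ) (hk : 2 ≤ k) {x x' : ℚ} {m m' : ℤ}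
    {h : x ∈ zOneOver k} {h' : x' ∈ zOneOver k} (hxx : x = x') (hmm : m = m') :
    bsElem k hk x h m = bsElem k hk x' h' m' := by
  subst hxx; subst hmm; rfl

lemma BS'conj_rel (k : ℕ) (hk : 2 ≤ k) (x₁ x₂ : ℚ) (h₁ : x₁ ∈ zOneOver k)
    (h₂ : x₂ ∈ zOneOver k) (m : ℤ)
    (hconj : IsConj (bsElem k hk x₁ h₁ m) (bsElem k hk x₂ h₂ m)) :
    ∃ (s : ℤ) (y : ℚ), y ∈ zOneOver k ∧ y + (k:ℚ)^s * x₁ = x₂ + (k:ℚ)^m * y := by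
  obtain ⟨hu, hh⟩ := hconj
  set h : ↥(BS k hk) := (hu : ↥(BS k hk)) with hhdef
  refine ⟨Multiplicative.toAdd (SemidirectProduct.right (h.1 : BSAmbient k hk)),
    Multiplicative.toAdd (SemidirectProduct.left (h.1 : BSAmbient k hk)), ?_, ?_⟩
  · exact h.2
  have hv : h.1 * (bsElem k hk x₁ h₁ m).1 = (bsElem k hk x₂ h₂ m).1 * h.1 :=
    congrArg Subtype.val hh
  have hl := congrArg SemidirectProduct.left hv
  simp only [bsElem, SemidirectProduct.mul_left, zpowersHom_apply] at hl
  have hl' := congrArg Multiplicative.toAdd hl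
  rw [toAdd_mul, toAdd_mul, bsAut_zpow, bsAut_zpow] at hl'
  simpa using hl'

/-- Let `k ≥ 2`, `G = BS(1,k) = ℤ[1/k] ⋊_φ ℤ`, `n ∈ ℤ`, and let
`a₁, …, a_r ∈ ℤ[1/k]` be distinct, giving the set `A = {(a₁,tⁿ), …, (a_r,tⁿ)}` of `r` elements
of equal `t`-exponent `n`.  Then there are `N₁, N₂ ∈ ℕ` and a positive integer `L` such that,
with `g = (0,t^{N₁})·(L,1)·(0,t^{N₂})`, the `r` elements `g·(aᵢ,tⁿ)` lie in pairwise distinct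
conjugacy classes of `G`; that is, `c(g·A) = |A|`. -/
theorem bs_translate_set_pairwise_nonconjugate (k : ℕ) (hk : 2 ≤ k) (n : ℤ) (r : ℕ)
    (a : Fin r → ℚ) (hmem : ∀ i, a i ∈ zOneOver k) (hinj : Function.Injective a) :
    ∃ (N₁ N₂ : ℕ) (L : ℤ), 0 < L ∧
      ∀ i j : Fin r, i ≠ j →
        ¬ IsConj
          (bsElem k hk 0 ((zOneOver k).zero_mem) (N₁ : ℤ) *
              bsElem k hk (L : ℚ) (intCast_mem_zOneOver k L) 0 *
              bsElem k hk 0 ((zOneOver k).zero_mem) (N₂ : ℤ) *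
              bsElem k hk (a i) (hmem i) n)
          (bsElem k hk 0 ((zOneOver k).zero_mem) (N₁ : ℤ) *
              bsElem k hk (L : ℚ) (intCast_mem_zOneOver k L) 0 *
              bsElem k hk 0 ((zOneOver k).zero_mem) (N₂ : ℤ) *
              bsElem k hk (a j) (hmem j) n) := by
  classical
  have hk0 : (k:ℚ) ≠ 0 := by
    have : 0 < k := by omega
    exact_mod_cast this.ne'
  have hK2 : (2:ℤ) ≤ (k:ℤ) := by exact_mod_cast hk
  rcases Nat.eq_zero_or_pos r with hr | hr
  · subst hr
    exact ⟨0, 0, 1, one_pos, fun i => i.elim0⟩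
  haveI hfin : Nonempty (Fin r) := Fin.pos_iff_nonempty.mp hr
  choose b d hbd using fun i => BS'rep_mem k hk (hmem i)
  set N₂ := Finset.univ.sup d with hN₂def
  have hdN : ∀ i, d i ≤ N₂ := fun i => Finset.le_sup (Finset.mem_univ i)
  set e : Fin r → ℤ := fun i => b i * (k:ℤ) ^ (N₂ - d i) with hedef
  have hea : ∀ i, (e i : ℚ) = (k:ℚ)^N₂ * a i := by
    intro i
    have h0 := hdN i
    rw [show (k:ℚ)^N₂ = (k:ℚ)^(N₂ - d i) * (k:ℚ)^(d i) from by
      rw [← pow_add]; congr 1; omega]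
    rw [hbd i, hedef]
    push_cast
    field_simp
  have heinj : Function.Injective e := by
    intro i j hij
    apply hinj
    have h1 := hea i
    have h2 := hea j
    rw [hij, h2] at h1
    exact mul_left_cancel₀ (pow_ne_zero N₂ hk0) h1.symm
  set mmin := Finset.inf' Finset.univ Finset.univ_nonempty e with hmindef
  set mmax := Finset.sup' Finset.univ Finset.univ_nonempty e with hmaxdef
  have hmin : ∀ i, mmin ≤ e i := fun i => Finset.inf'_le e (Finset.mem_univ i)
  have hmax : ∀ i, e i ≤ mmax := fun i => Finset.le_sup' e (Finset.mem_univ i)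
  obtain ⟨q, hq⟩ := pow_unbounded_of_one_lt (y := (k:ℤ)) ((mmax - mmin + 1) ⊔ (mmin + 1))
    (by exact_mod_cast (show 1 < k by omega))
  have hq1 : mmax - mmin + 1 < (k:ℤ)^q := lt_of_le_of_lt le_sup_left hq
  have hq2 : mmin + 1 ≤ (k:ℤ)^q := le_of_lt (lt_of_le_of_lt le_sup_right hq)
  have hKq1 : (1:ℤ) ≤ (k:ℤ)^q := one_le_pow₀ (by linarith)
  set L := (k:ℤ)^q - mmin with hLdef
  have hL : 0 < L := by rw [hLdef]; linarith
  have hXlow : ∀ i, (k:ℤ)^q ≤ L + e i := by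
    intro i
    have := hmin i
    rw [hLdef]
    linarith
  have hXhigh : ∀ i, L + e i < (k:ℤ)^(q+1) := by
    intro i
    have h1 := hmax i
    have h2 : (k:ℤ)^(q+1) = (k:ℤ)^q * (k:ℤ) := pow_succ _ _
    rw [hLdef]
    nlinarith
  set M := 2*(q+1)*(n.natAbs + N₂ + 1) with hMdef
  have hM2 : 2*(n.natAbs + N₂ + 1) ≤ M := by
    rw [hMdef]
    exact Nat.mul_le_mul_right _ (by omega)
  have hMpos : 0 < M := by omega
  set N₁ := ((M:ℤ) - n - N₂).toNat with hN₁def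
  have hN₁ : (N₁:ℤ) = (M:ℤ) - n - (N₂:ℤ) := Int.toNat_of_nonneg (by omega)
  refine ⟨N₁, N₂, L, hL, ?_⟩
  intro i j hij hconj
  have hmemX : ∀ i : Fin r, (k:ℚ)^((N₁:ℤ)) * ((L + e i : ℤ):ℚ) ∈ zOneOver k := fun i =>
    zOneOver_smul k hk _ (intCast_mem_zOneOver k (L + e i))
  have hgi : ∀ i : Fin r,
      (bsElem k hk 0 ((zOneOver k).zero_mem) (N₁ : ℤ) *
          bsElem k hk (L : ℚ) (intCast_mem_zOneOver k L) 0 *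
          bsElem k hk 0 ((zOneOver k).zero_mem) (N₂ : ℤ) *
          bsElem k hk (a i) (hmem i) n)
      = bsElem k hk ((k:ℚ)^((N₁:ℤ)) * ((L + e i : ℤ):ℚ)) (hmemX i) ((M:ℤ)) := by
    intro i
    rw [BS'bsElem_mul, BS'bsElem_mul, BS'bsElem_mul]
    apply BS'bsElem_ext
    · have h1 := hea i
      have h2 : ((L + e i : ℤ):ℚ) = (L:ℚ) + (e i:ℚ) := by push_cast; ring
      rw [h2, h1]
      simp only [add_zero, mul_zero, zero_add]
      rw [zpow_add₀ hk0, zpow_natCast (k:ℚ) N₂]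
      ring
    · omega
  rw [hgi i, hgi j] at hconj
  obtain ⟨s, y, hy, heq⟩ := BS'conj_rel k hk _ _ _ _ _ hconj
  obtain ⟨A, E, hAE⟩ := BS'rep_mem k hk hy
  have hyA : (k:ℚ)^((E:ℤ)) * y = A := by
    rw [hAE, zpow_natCast]
    field_simp
  set w := (-(s + (N₁:ℤ))).toNat with hwdef
  set α := (s + (N₁:ℤ) + (w:ℤ)).toNat with hαdef
  have hα : (α:ℤ) = s + (N₁:ℤ) + (w:ℤ) := Int.toNat_of_nonneg (by omega)
  have hQ : (k:ℚ)^((E:ℤ)) * ((k:ℚ)^s * (k:ℚ)^((N₁:ℤ)) * (k:ℚ)^((w:ℤ))) * ((L + e i : ℤ):ℚ)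
      - (k:ℚ)^((E:ℤ)) * (k:ℚ)^((w:ℤ)) * (k:ℚ)^((N₁:ℤ)) * ((L + e j : ℤ):ℚ)
      = ((k:ℚ)^((M:ℤ)) - 1) * ((k:ℚ)^((w:ℤ)) * A) := by
    linear_combination ((k:ℚ)^((E:ℤ)) * (k:ℚ)^((w:ℤ))) * heq
      + (((k:ℚ)^((M:ℤ)) - 1) * (k:ℚ)^((w:ℤ))) * hyA
  have hκ1 : (k:ℚ)^(E+α) = (k:ℚ)^((E:ℤ)) * ((k:ℚ)^s * (k:ℚ)^((N₁:ℤ)) * (k:ℚ)^((w:ℤ))) := by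
    rw [← zpow_natCast (k:ℚ) (E+α),
      show ((E+α:ℕ):ℤ) = (E:ℤ) + (s + (N₁:ℤ) + (w:ℤ)) from by push_cast [hα]; ring,
      zpow_add₀ hk0, zpow_add₀ hk0, zpow_add₀ hk0]
  have hκ2 : (k:ℚ)^(E+w+N₁) = (k:ℚ)^((E:ℤ)) * (k:ℚ)^((w:ℤ)) * (k:ℚ)^((N₁:ℤ)) := by
    rw [pow_add, pow_add, ← zpow_natCast (k:ℚ) E, ← zpow_natCast (k:ℚ) w,
      ← zpow_natCast (k:ℚ) N₁]
  have hκ3 : (k:ℚ)^M = (k:ℚ)^((M:ℤ)) := (zpow_natCast _ _).symm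
  have hκ4 : (k:ℚ)^w = (k:ℚ)^((w:ℤ)) := (zpow_natCast _ _).symm
  have hQ2 : (k:ℚ)^(E+α) * ((L + e i : ℤ):ℚ) - (k:ℚ)^(E+w+N₁) * ((L + e j : ℤ):ℚ)
      = ((k:ℚ)^M - 1) * ((k:ℚ)^w * A) := by
    rw [hκ1, hκ2, hκ3, hκ4]; exact hQ
  have hZ : (k:ℤ)^(E+α) * (L + e i) - (k:ℤ)^(E+w+N₁) * (L + e j)
      = ((k:ℤ)^M - 1) * ((k:ℤ)^w * A) := by exact_mod_cast hQ2
  have hDM : ((k:ℤ)^(2*(q+1)) - 1) ∣ (k:ℤ)^M - 1 := by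
    have h := sub_dvd_pow_sub_pow ((k:ℤ)^(2*(q+1))) 1 (n.natAbs + N₂ + 1)
    simp only [one_pow, ← pow_mul] at h
    rwa [hMdef]
  have hdvd0 : ((k:ℤ)^(2*(q+1)) - 1) ∣
      (k:ℤ)^(E+α) * (L + e i) - (k:ℤ)^(E+w+N₁) * (L + e j) := by
    rw [hZ]; exact Dvd.dvd.mul_right hDM _
  have hred := BS'reduce_dvd k (2*(q+1)) (by omega) (E+α) (E+w+N₁) (L + e i) (L + e j) hdvd0
  have hγlt : (E+α + (2*(q+1) - (E+w+N₁) % (2*(q+1)))) % (2*(q+1)) < 2*(q+1) :=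
    Nat.mod_lt _ (by omega)
  have hXX : L + e i = L + e j := by
    refine BS'core_lemma k hk (q+1) (by omega) (L + e i) (L + e j) ?_ (hXhigh i) ?_ (hXhigh j)
      _ hγlt hred
    · simpa using hXlow i
    · simpa using hXlow j
  exact hij (heinj (by omega))
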